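/- A CAF F = (A,R,claim) belongs to Image_4 (i.e. F = Red_4(F') for some PCAF F') if and only if there are no arguments a,a',b,b' in F with claim(a)=claim(a') and claim(b)=claim(b') such that (a,b) ∈ wfp(F), (b,a) ∉ R, (a',b) ∈ R, and either (b,a') ∉ R, or ((a',b') ∉ R and (b',a') ∉ R). -/

import Mathlib

/-- A claim-augmented argumentation framework (CAF): a finite set of arguments,
an attack relation between the arguments, and a claim function assigning
a claim to each argument.  Arguments and claims are drawn from `ℕ`. -/
structure CAF where
  args : Finset ℕ
  att : Set (ℕ × ℕ)
  claim : ℕ → ℕ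
  att_dom : ∀ p ∈ att, p.1 ∈ args ∧ p.2 ∈ args

namespace CAF

/-- A CAF is well-formed if arguments with the same claim attack the same arguments. -/
def wf (F : CAF) : Prop :=
  ∀ a ∈ F.args, ∀ b ∈ F.args, F.claim a = F.claim b →
    ∀ c, ((a, c) ∈ F.att ↔ (b, c) ∈ F.att)

/-- `S` attacks the argument `b` in `F`. -/
def attacks (F : CAF) (S : Set ℕ) (b : ℕ) : Prop := ∃ a ∈ S, (a, b) ∈ F.att

/-- The argument `a` is defended by `S` in `F`. -/
def defends (F : CAF) (S : Set ℕ) (a : ℕ) : Prop :=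
  ∀ b, (b, a) ∈ F.att → F.attacks S b

/-- The range `S⊕` of `S` in `F`. -/
def range (F : CAF) (S : Set ℕ) : Set ℕ := S ∪ {b | F.attacks S b}

/-- Conflict-free sets. -/
def cf (F : CAF) (S : Set ℕ) : Prop :=
  S ⊆ ↑F.args ∧ ∀ a ∈ S, ∀ b ∈ S, (a, b) ∉ F.att

/-- Admissible sets. -/
def adm (F : CAF) (S : Set ℕ) : Prop :=
  F.cf S ∧ ∀ a ∈ S, F.defends S a

/-- Complete extensions. -/
def com (F : CAF) (S : Set ℕ) : Prop :=
  F.adm S ∧ ∀ a ∈ F.args, F.defends S a → a ∈ S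

/-- Naive extensions: ⊆-maximal conflict-free sets. -/
def naive (F : CAF) (S : Set ℕ) : Prop :=
  F.cf S ∧ ¬ ∃ T, F.cf T ∧ S ⊂ T

/-- Stable extensions. -/
def stb (F : CAF) (S : Set ℕ) : Prop :=
  F.cf S ∧ ∀ a ∈ F.args, a ∉ S → F.attacks S a

/-- Preferred extensions: ⊆-maximal admissible sets. -/
def prf (F : CAF) (S : Set ℕ) : Prop :=
  F.adm S ∧ ¬ ∃ T, F.adm T ∧ S ⊂ T

/-- Semi-stable extensions: admissible sets with ⊆-maximal range among admissible sets. -/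
def sem (F : CAF) (S : Set ℕ) : Prop :=
  F.adm S ∧ ¬ ∃ T, F.adm T ∧ F.range S ⊂ F.range T

/-- Stage extensions: conflict-free sets with ⊆-maximal range among conflict-free sets. -/
def stg (F : CAF) (S : Set ℕ) : Prop :=
  F.cf S ∧ ¬ ∃ T, F.cf T ∧ F.range S ⊂ F.range T

/-- The claim-based variant `σ_c` of a semantics `σ`. -/
def claimSem (σ : CAF → Set ℕ → Prop) (F : CAF) : Set (Set ℕ) :=
  {C | ∃ S, σ F S ∧ F.claim '' S = C}

/-- The wf-problematic part of a CAF: the pairs of arguments `(a,b)` such that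
`(a,b)` is not an attack but some argument `a'` with the same claim as `a` attacks `b`. -/
def wfp (F : CAF) : Set (ℕ × ℕ) :=
  {p | p.1 ∈ F.args ∧ p.2 ∈ F.args ∧ p ∉ F.att ∧
       ∃ a' ∈ F.args, F.claim a' = F.claim p.1 ∧ (a', p.2) ∈ F.att}

end CAF

/-- A preference-based CAF (PCAF): a well-formed CAF together with an
asymmetric preference relation over its arguments. -/
structure PCAF extends CAF where
  pref : ℕ → ℕ → Prop
  pref_dom : ∀ a b, pref a b → a ∈ args ∧ b ∈ args
  pref_asymm : ∀ a b, pref a b → ¬ pref b a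
  isWf : toCAF.wf

/-- The attack relation obtained from a PCAF by Reduction `i` (`i ∈ {1,2,3,4}`). -/
def redAtt (i : ℕ) (F : PCAF) : Set (ℕ × ℕ) :=
  if i = 1 then {p | p ∈ F.att ∧ ¬ F.pref p.2 p.1}
  else if i = 2 then
    {p | (p ∈ F.att ∧ ¬ F.pref p.2 p.1) ∨
         ((p.2, p.1) ∈ F.att ∧ p ∉ F.att ∧ F.pref p.1 p.2)}
  else if i = 3 then
    {p | (p ∈ F.att ∧ ¬ F.pref p.2 p.1) ∨ (p ∈ F.att ∧ (p.2, p.1) ∉ F.att)}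
  else if i = 4 then
    {p | (p ∈ F.att ∧ ¬ F.pref p.2 p.1) ∨
         ((p.2, p.1) ∈ F.att ∧ p ∉ F.att ∧ F.pref p.1 p.2) ∨
         (p ∈ F.att ∧ (p.2, p.1) ∉ F.att)}
  else ∅

/-- The CAF `Red_i(F)` obtained from the PCAF `F` by Reduction `i`. -/
def Red (i : ℕ) (F : PCAF) : CAF where
  args := F.args
  att := redAtt i F
  claim := F.claim
  att_dom := by
    intro p hp
    unfold redAtt at hp
    split_ifs at hp
    · simp only [Set.mem_setOf_eq] at hp
      exact F.att_dom p hp.1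
    · simp only [Set.mem_setOf_eq] at hp
      rcases hp with ⟨h, -⟩ | ⟨h, -, -⟩
      · exact F.att_dom p h
      · exact ⟨(F.att_dom _ h).2, (F.att_dom _ h).1⟩
    · simp only [Set.mem_setOf_eq] at hp
      rcases hp with ⟨h, -⟩ | ⟨h, -⟩ <;> exact F.att_dom p h
    · simp only [Set.mem_setOf_eq] at hp
      rcases hp with ⟨h, -⟩ | ⟨h, -, -⟩ | ⟨h, -⟩
      · exact F.att_dom p h
      · exact ⟨(F.att_dom _ h).2, (F.att_dom _ h).1⟩
      · exact F.att_dom p h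
    · exact absurd hp (Set.notMem_empty p)

/-- `Image_i`: the class of CAFs obtainable by applying Reduction `i` to a PCAF. -/
def ImageI (i : ℕ) : Set CAF := {F | ∃ G : PCAF, Red i G = F}

/-- `ImageTrans_i`: the class of CAFs obtainable by applying Reduction `i`
to a PCAF with a transitive preference relation. -/
def ImageTransI (i : ℕ) : Set CAF :=
  {F | ∃ G : PCAF, Transitive G.pref ∧ Red i G = F}

/-- The class of well-formed CAFs. -/
def wfCAFs : Set CAF := {F | F.wf}

/-- The preference-claim-based variant `σ_p^i` of a semantics `σ`. -/
def prefSem (σ : CAF → Set ℕ → Prop) (i : ℕ) (F : PCAF) : Set (Set ℕ) :=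
  CAF.claimSem σ (Red i F)

/-- `E_0(C)`: all arguments of `F` with a claim in `C`. -/
def E0 (F : PCAF) (C : Set ℕ) : Set ℕ := {a | a ∈ F.args ∧ F.claim a ∈ C}

/-- `E_1^i(C)`: the arguments of `E_0(C)` not attacked by `E_0(C)` in the
underlying AF of `F` (this set does not depend on `i`). -/
def E1 (F : PCAF) (C : Set ℕ) : Set ℕ :=
  E0 F C \ {b | ∃ a ∈ E0 F C, (a, b) ∈ F.att}

/-- The sequence `E_k^i(C)`. -/
def Ek (F : PCAF) (i : ℕ) (C : Set ℕ) : ℕ → Set ℕ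
  | 0 => E0 F C
  | 1 => E1 F C
  | (k + 2) => {x | x ∈ Ek F i C (k + 1) ∧ (Red i F).defends (Ek F i C (k + 1)) x}

/-- `E_*^i(C)`: the fixed point of the sequence `E_k^i(C)` (reached after at
most `|A|` steps, since the sequence is ⊆-decreasing from index 1 on). -/
def Estar (F : PCAF) (i : ℕ) (C : Set ℕ) : Set ℕ := Ek F i C (F.args.card + 2)

/-- Auxiliary: the repaired (well-formed) attack relation used to build a PCAF
whose Reduction 4 gives back `F`. -/
def Rset (F : CAF) : Set (ℕ × ℕ) :=
  {p | p.1 ∈ F.args ∧ p.2 ∈ F.args ∧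
    (∃ x₀ ∈ F.args, F.claim x₀ = F.claim p.1 ∧ (x₀, p.2) ∈ F.att) ∧
    (∀ x' ∈ F.args, F.claim x' = F.claim p.1 → (x', p.2) ∉ F.att → (p.2, x') ∈ F.att)}

/-- Auxiliary: the preference relation used to build the PCAF. -/
def Pref (F : CAF) (p q : ℕ) : Prop :=
  ((p, q) ∈ F.att ∧ (p, q) ∉ Rset F) ∨ ((q, p) ∈ Rset F ∧ (q, p) ∉ F.att)

lemma mem_red4 (G : PCAF) (x y : ℕ) :
    (x, y) ∈ redAtt 4 G ↔ ((x, y) ∈ G.att ∧ ¬ G.pref y x) ∨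
      ((y, x) ∈ G.att ∧ (x, y) ∉ G.att ∧ G.pref x y) ∨
      ((x, y) ∈ G.att ∧ (y, x) ∉ G.att) := by
  simp [redAtt]

lemma caf_ext {F G : CAF} (h1 : F.args = G.args) (h2 : F.att = G.att)
    (h3 : F.claim = G.claim) : F = G := by
  cases F; cases G
  simp only at h1 h2 h3
  subst h1; subst h2; subst h3
  rfl

/-- Characterization of `Image_4`: a CAF `F` belongs to `Image_4` iff there are no
arguments `a, a', b, b'` of `F` with `claim a = claim a'` and `claim b = claim b'`
such that `(a,b) ∈ wfp(F)`, `(b,a) ∉ R`, `(a',b) ∈ R`, and either `(b,a') ∉ R` or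
(`(a',b') ∉ R` and `(b',a') ∉ R`). -/
theorem stmt_6 (F : CAF) :
    F ∈ ImageI 4 ↔
      ¬ ∃ a a' b b' : ℕ,
          a ∈ F.args ∧ a' ∈ F.args ∧ b ∈ F.args ∧ b' ∈ F.args ∧
          F.claim a = F.claim a' ∧ F.claim b = F.claim b' ∧
          (a, b) ∈ F.wfp ∧ (b, a) ∉ F.att ∧ (a', b) ∈ F.att ∧
          ((b, a') ∉ F.att ∨ ((a', b') ∉ F.att ∧ (b', a') ∉ F.att)) := by
  constructor
  · rintro ⟨G, rfl⟩
    rintro ⟨a, a', b, b', ha, ha', hb, hb', hca, hcb, hwfp, hba, hab', hopt⟩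
    have hwfG := G.isWf
    have hnab : (a, b) ∉ redAtt 4 G := hwfp.2.2.1
    by_cases hRab' : (a', b) ∈ G.att
    · -- a' attacks b in G; by well-formedness so does a
      have hRab : (a, b) ∈ G.att := (hwfG a' ha' a ha hca.symm b).mp hRab'
      have hpba : G.pref b a := by
        by_contra hnp
        exact hnab ((mem_red4 G a b).mpr (Or.inl ⟨hRab, hnp⟩))
      have hRba : (b, a) ∈ G.att := by
        by_contra hn
        exact hnab ((mem_red4 G a b).mpr (Or.inr (Or.inr ⟨hRab, hn⟩)))
      exact hba ((mem_red4 G b a).mpr (Or.inl ⟨hRba, G.pref_asymm b a hpba⟩))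
    · -- the attack (a',b) comes from reversal
      rcases (mem_red4 G a' b).mp hab' with ⟨h, -⟩ | ⟨hRba', -, hp⟩ | ⟨h, -⟩
      · exact hRab' h
      · have hba'D : (b, a') ∈ redAtt 4 G :=
          (mem_red4 G b a').mpr (Or.inr (Or.inr ⟨hRba', hRab'⟩))
        rcases hopt with hL | ⟨hn1, hn2⟩
        · exact hL hba'D
        · have hRb'a' : (b', a') ∈ G.att := (hwfG b hb b' hb' hcb a').mp hRba'
          have hpa'b' : G.pref a' b' := by
            by_contra hnp
            exact hn2 ((mem_red4 G b' a').mpr (Or.inl ⟨hRb'a', hnp⟩))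
          have hRa'b' : (a', b') ∈ G.att := by
            by_contra hn
            exact hn2 ((mem_red4 G b' a').mpr (Or.inr (Or.inr ⟨hRb'a', hn⟩)))
          exact hn1 ((mem_red4 G a' b').mpr
            (Or.inl ⟨hRa'b', G.pref_asymm a' b' hpa'b'⟩))
      · exact hRab' h
  · intro H
    -- Key consequence of the absence of bad quadruples
    have key : ∀ a a' b b', a ∈ F.args → a' ∈ F.args → b ∈ F.args → b' ∈ F.args →
        F.claim a = F.claim a' → F.claim b = F.claim b' →
        (a, b) ∉ F.att → (a', b) ∈ F.att → (b, a) ∉ F.att →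
        (b, a') ∈ F.att ∧ ((a', b') ∈ F.att ∨ (b', a') ∈ F.att) := by
      intro a a' b b' ha ha' hb hb' hca hcb hnab hab hnba
      by_contra hcon
      apply H
      refine ⟨a, a', b, b', ha, ha', hb, hb', hca, hcb,
        ⟨ha, hb, hnab, a', ha', hca.symm, hab⟩, hnba, hab, ?_⟩
      by_contra hd
      push_neg at hd
      exact hcon ⟨hd.1, by tauto⟩
    have L1 : ∀ x y, (x, y) ∈ Rset F → (x, y) ∉ F.att → (y, x) ∈ F.att := by
      intro x y hR hn
      exact hR.2.2.2 x hR.1 rfl hn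
    have L2 : ∀ x y, (x, y) ∈ F.att → (x, y) ∉ Rset F → (y, x) ∈ Rset F := by
      intro x y hD hnR
      have hx : x ∈ F.args := (F.att_dom _ hD).1
      have hy : y ∈ F.args := (F.att_dom _ hD).2
      have hex : ∃ x' ∈ F.args, F.claim x' = F.claim x ∧ (x', y) ∉ F.att ∧
          (y, x') ∉ F.att := by
        by_contra hno
        push_neg at hno
        exact hnR ⟨hx, hy, ⟨x, hx, rfl, hD⟩, fun x' hx' hcl hna => hno x' hx' hcl hna⟩
      obtain ⟨x', hx', hcl, hn1, hn2⟩ := hex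
      refine ⟨hy, hx, ⟨y, hy, rfl, (key x' x y y hx' hx hy hy hcl rfl hn1 hD hn2).1⟩, ?_⟩
      intro b'' hb'' hclb hnb
      rcases (key x' x y b'' hx' hx hy hb'' hcl hclb.symm hn1 hD hn2).2 with h | h
      · exact h
      · exact absurd h hnb
    have L3 : ∀ x y, (x, y) ∈ Rset F → (x, y) ∉ F.att → (y, x) ∈ Rset F := by
      intro x y hR hn
      have hyx : (y, x) ∈ F.att := L1 x y hR hn
      by_contra hnR
      have hx := hR.1
      have hy := hR.2.1
      have hex : ∃ b' ∈ F.args, F.claim b' = F.claim y ∧ (b', x) ∉ F.att ∧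
          (x, b') ∉ F.att := by
        by_contra hno
        push_neg at hno
        exact hnR ⟨hy, hx, ⟨y, hy, rfl, hyx⟩, fun b' h1 h2 h3 => hno b' h1 h2 h3⟩
      obtain ⟨b', hb', hclb, hn1, hn2⟩ := hex
      exact hn (key b' y x x hb' hy hx hx hclb rfl hn1 hyx hn2).1
    refine ⟨⟨⟨F.args, Rset F, F.claim, fun p hp => ⟨hp.1, hp.2.1⟩⟩, Pref F,
      ?_, ?_, ?_⟩, ?_⟩
    · -- pref_dom
      rintro p q (⟨h1, -⟩ | ⟨h1, -⟩)
      · exact F.att_dom _ h1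
      · exact ⟨h1.2.1, h1.1⟩
    · -- pref_asymm
      rintro p q (⟨h1, h2⟩ | ⟨h1, h2⟩) (⟨h3, h4⟩ | ⟨h3, h4⟩)
      · exact h4 (L2 p q h1 h2)
      · exact h4 h1
      · exact h2 h3
      · exact h4 (L1 q p h1 h2)
    · -- well-formedness of Rset
      intro u hu v hv hcl c
      show (u, c) ∈ Rset F ↔ (v, c) ∈ Rset F
      simp only [Rset, Set.mem_setOf_eq]
      rw [hcl]
      simp [hu, hv]
    · -- Red 4 G = F
      refine caf_ext rfl ?_ rfl
      show redAtt 4 _ = F.att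
      ext ⟨x, y⟩
      rw [mem_red4]
      show ((x, y) ∈ Rset F ∧ ¬ Pref F y x) ∨
          ((y, x) ∈ Rset F ∧ (x, y) ∉ Rset F ∧ Pref F x y) ∨
          ((x, y) ∈ Rset F ∧ (y, x) ∉ Rset F) ↔ (x, y) ∈ F.att
      constructor
      · rintro (⟨hR, hnp⟩ | ⟨hR, hnR, hp⟩ | ⟨hR, hnR⟩)
        · by_contra hn
          exact hnp (Or.inr ⟨hR, hn⟩)
        · rcases hp with ⟨h, -⟩ | ⟨h1, h2⟩
          · exact h
          · exact L1 y x h1 h2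
        · by_contra hn
          exact hnR (L3 x y hR hn)
      · intro hD
        by_cases hR : (x, y) ∈ Rset F
        · by_cases hR' : (y, x) ∈ Rset F
          · refine Or.inl ⟨hR, ?_⟩
            rintro (⟨-, p2⟩ | ⟨-, p2⟩)
            · exact p2 hR'
            · exact p2 hD
          · exact Or.inr (Or.inr ⟨hR, hR'⟩)
        · exact Or.inr (Or.inl ⟨L2 x y hD hR, hR, Or.inl ⟨hD, hR⟩⟩)
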